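/- Let A ∈ ℂ^{n×n}, ε > 0, and suppose the strict (unstructured) ε-pseudospectrum Λ'_ε(A) has connected components S₁,…,S_ρ. Define μ(ε,A) := max over i of the sum of algebraic multiplicities of the eigenvalues of A lying in Sᵢ, and for any X ∈ ℂ^{n×n} let m(X) := max over ξ ∈ spectrum(X) of the algebraic multiplicity of ξ. Let k be an integer with m(A) ≤ k ≤ n. Then sup{ε > 0 : μ(ε,A) ≤ k} ≤ min{‖X − A‖ : X ∈ ℂ^{n×n}, m(X) ≥ k+1}. -/

import Mathlib

open Matrix Polynomial Set
open scoped Classical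

/-- The spectral (ℓ²-operator) norm of a complex matrix. -/
noncomputable def specNorm {n : ℕ} (M : Matrix (Fin n) (Fin n) ℂ) : ℝ :=
  ‖Matrix.toEuclideanCLM (𝕜 := ℂ) M‖

/-- The strict (unstructured) ε-pseudospectrum of `A` for the spectral norm. -/
noncomputable def strictPseudo {n : ℕ} (A : Matrix (Fin n) (Fin n) ℂ) (ε : ℝ) : Set ℂ :=
  {z : ℂ | ∃ X : Matrix (Fin n) (Fin n) ℂ, specNorm (X - A) < ε ∧ z ∈ spectrum ℂ X}

/-- `μ(ε, A)`: the maximum, over the connected components `T` of `Λ'_ε(A)`, of the sum of the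
algebraic multiplicities of the eigenvalues of `A` lying in `T`. -/
noncomputable def muEps {n : ℕ} (A : Matrix (Fin n) (Fin n) ℂ) (ε : ℝ) : ℕ :=
  sSup {m : ℕ | ∃ w ∈ strictPseudo A ε,
    m = ∑ α ∈ A.charpoly.roots.toFinset.filter
          (fun α => α ∈ connectedComponentIn (strictPseudo A ε) w),
        A.charpoly.rootMultiplicity α}

/-- `m(X)`: the maximum algebraic multiplicity of an eigenvalue of `X`. -/
noncomputable def maxMult {n : ℕ} (X : Matrix (Fin n) (Fin n) ℂ) : ℕ :=
  sSup {m : ℕ | ∃ ξ ∈ spectrum ℂ X, m = X.charpoly.rootMultiplicity ξ}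

/- ### basic specNorm facts -/
lemma specNorm_scalar {n : ℕ} (hn : 1 ≤ n) (c : ℂ) :
    specNorm (algebraMap ℂ (Matrix (Fin n) (Fin n) ℂ) c) = ‖c‖ := by
  haveI : Nonempty (Fin n) := ⟨⟨0, hn⟩⟩
  unfold specNorm
  rw [AlgHomClass.commutes]
  exact norm_algebraMap' _ c

lemma specNorm_smul_le {n : ℕ} (hn : 1 ≤ n) (c : ℂ) (M : Matrix (Fin n) (Fin n) ℂ) :
    specNorm (c • M) ≤ ‖c‖ * specNorm M := by
  rw [Algebra.smul_def]
  have h : specNorm (algebraMap ℂ (Matrix (Fin n) (Fin n) ℂ) c * M)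
      ≤ specNorm (algebraMap ℂ (Matrix (Fin n) (Fin n) ℂ) c) * specNorm M := by
    unfold specNorm; rw [_root_.map_mul]; exact norm_mul_le _ _
  rwa [specNorm_scalar hn] at h

lemma spectrum_toEuclideanCLM {n : ℕ} (M : Matrix (Fin n) (Fin n) ℂ) :
    spectrum ℂ (Matrix.toEuclideanCLM (𝕜 := ℂ) M) = spectrum ℂ M :=
  AlgEquiv.spectrum_eq (Matrix.toEuclideanCLM (𝕜 := ℂ) (n := Fin n)) M

lemma norm_le_specNorm_of_mem {n : ℕ} (hn : 1 ≤ n) {M : Matrix (Fin n) (Fin n) ℂ} {z : ℂ}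
    (hz : z ∈ spectrum ℂ M) : ‖z‖ ≤ specNorm M := by
  haveI : Nonempty (Fin n) := ⟨⟨0, hn⟩⟩
  rw [← spectrum_toEuclideanCLM] at hz
  exact spectrum.norm_le_norm_of_mem hz

lemma specNorm_add_le {n : ℕ} (M N : Matrix (Fin n) (Fin n) ℂ) :
    specNorm (M + N) ≤ specNorm M + specNorm N := by
  unfold specNorm; rw [map_add]; exact norm_add_le _ _

lemma specNorm_nonneg {n : ℕ} (M : Matrix (Fin n) (Fin n) ℂ) : 0 ≤ specNorm M :=
  norm_nonneg _

/- ### charpoly facts -/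
lemma isOpen_strictPseudo {n : ℕ} (hn : 1 ≤ n) (A : Matrix (Fin n) (Fin n) ℂ) (ε : ℝ) :
    IsOpen (strictPseudo A ε) := by
  rw [Metric.isOpen_iff]
  rintro z ⟨X, hX, hz⟩
  refine ⟨ε - specNorm (X - A), by linarith, ?_⟩
  intro z' hz'
  rw [Metric.mem_ball] at hz'
  refine ⟨X + algebraMap ℂ _ (z' - z), ?_, ?_⟩
  · have h1 : X + algebraMap ℂ (Matrix (Fin n) (Fin n) ℂ) (z' - z) - A
        = (X - A) + algebraMap ℂ _ (z' - z) := by abel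
    rw [h1]
    calc specNorm ((X - A) + algebraMap ℂ _ (z' - z))
        ≤ specNorm (X - A) + specNorm (algebraMap ℂ _ (z' - z)) := specNorm_add_le _ _
      _ = specNorm (X - A) + ‖z' - z‖ := by rw [specNorm_scalar hn]
      _ < ε := by
          rw [← dist_eq_norm z' z]; linarith
  · rw [spectrum.mem_iff] at hz ⊢
    have heq : algebraMap ℂ (Matrix (Fin n) (Fin n) ℂ) z' - (X + algebraMap ℂ _ (z' - z))
        = algebraMap ℂ _ z - X := by
      rw [map_sub]; abel
    rw [heq]
    exact hz

lemma eval_charpoly {n : ℕ} (M : Matrix (Fin n) (Fin n) ℂ) (z : ℂ) :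
    eval z M.charpoly = (Matrix.scalar (Fin n) z - M).det := by
  rw [Matrix.charpoly]
  have h1 : eval z (charmatrix M).det = ((charmatrix M).map (evalRingHom z)).det :=
    RingHom.map_det (evalRingHom z) (charmatrix M)
  rw [h1]
  congr 1
  ext i j
  by_cases h : i = j <;>
    simp [charmatrix_apply, Matrix.map_apply, Matrix.sub_apply, Matrix.scalar_apply,
      Matrix.diagonal_apply, h]

lemma mem_spectrum_iff_root {n : ℕ} (M : Matrix (Fin n) (Fin n) ℂ) (z : ℂ) :
    z ∈ spectrum ℂ M ↔ M.charpoly.IsRoot z := by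
  rw [spectrum.mem_iff, IsRoot, eval_charpoly]
  have halg : algebraMap ℂ (Matrix (Fin n) (Fin n) ℂ) z = Matrix.scalar (Fin n) z := rfl
  rw [halg]
  constructor
  · intro h
    by_contra hdet
    exact h ((Matrix.isUnit_iff_isUnit_det _).2 (isUnit_iff_ne_zero.2 hdet))
  · intro h hu
    exact (isUnit_iff_ne_zero.1 ((Matrix.isUnit_iff_isUnit_det _).1 hu)) h

lemma charpoly_natDegree' {n : ℕ} (M : Matrix (Fin n) (Fin n) ℂ) :
    M.charpoly.natDegree = n := by
  rw [Matrix.charpoly_natDegree_eq_dim, Fintype.card_fin]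

lemma charpoly_roots_card {n : ℕ} (M : Matrix (Fin n) (Fin n) ℂ) :
    Multiset.card M.charpoly.roots = n := by
  rw [Polynomial.splits_iff_card_roots.mp (IsAlgClosed.splits M.charpoly)]
  exact charpoly_natDegree' M

lemma multiset_exists_tuple {n : ℕ} (s : Multiset ℂ) (h : Multiset.card s = n) :
    ∃ r : Fin n → ℂ, Multiset.map r Finset.univ.val = s := by
  rcases s.exists_rep with ⟨l, rfl⟩
  have h' : l.length = n := h
  subst h'
  refine ⟨l.get, ?_⟩
  have h1 : (Finset.univ : Finset (Fin l.length)).val = ↑(List.finRange l.length) := rfl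
  rw [h1, Multiset.map_coe]
  congr 1
  rw [← List.ofFn_eq_map, List.ofFn_get]

lemma exists_roots_tuple {n : ℕ} (M : Matrix (Fin n) (Fin n) ℂ) :
    ∃ r : Fin n → ℂ, M.charpoly.roots = Multiset.map r Finset.univ.val := by
  obtain ⟨r, hr⟩ := multiset_exists_tuple M.charpoly.roots (charpoly_roots_card M)
  exact ⟨r, hr.symm⟩

lemma eval_eq_prod_of_roots_tuple {n : ℕ} {M : Matrix (Fin n) (Fin n) ℂ} {r : Fin n → ℂ}
    (hr : M.charpoly.roots = Multiset.map r Finset.univ.val) (w : ℂ) :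
    eval w M.charpoly = ∏ i, (w - r i) := by
  conv_lhs => rw [← Polynomial.prod_multiset_X_sub_C_of_monic_of_roots_card_eq
    (Matrix.charpoly_monic M) (by rw [charpoly_roots_card, charpoly_natDegree'])]
  rw [hr, eval_multiset_prod, Multiset.map_map, Multiset.map_map]
  rw [Finset.prod_eq_multiset_prod]
  congr 1
  apply Multiset.map_congr rfl
  intro i _
  simp
noncomputable def rootCount {n : ℕ} (M : Matrix (Fin n) (Fin n) ℂ) (U : Set ℂ) : ℕ :=
  Multiset.card (M.charpoly.roots.filter (fun α => α ∈ U))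

lemma rootCount_of_tuple {n : ℕ} {M : Matrix (Fin n) (Fin n) ℂ} {r : Fin n → ℂ}
    (hr : M.charpoly.roots = Multiset.map r Finset.univ.val) (U : Set ℂ) :
    rootCount M U = (Finset.univ.filter (fun i => r i ∈ U)).card := by
  rw [rootCount, hr, ← Multiset.countP_eq_card_filter, Multiset.countP_map]
  rfl

lemma roots_mem_pseudo {n : ℕ} (hn : 1 ≤ n) (A X : Matrix (Fin n) (Fin n) ℂ)
    {ε : ℝ} (hX : specNorm (X - A) < ε) {t : ℝ} (ht : t ∈ Icc (0:ℝ) 1) {z : ℂ}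
    (hz : (A + (t:ℂ) • (X - A)).charpoly.IsRoot z) : z ∈ strictPseudo A ε := by
  refine ⟨A + (t:ℂ) • (X - A), ?_, (mem_spectrum_iff_root _ z).2 hz⟩
  have h1 : A + (t:ℂ) • (X - A) - A = (t:ℂ) • (X - A) := by abel
  rw [h1]
  calc specNorm ((t:ℂ) • (X - A)) ≤ ‖(t:ℂ)‖ * specNorm (X - A) := specNorm_smul_le hn _ _
    _ ≤ 1 * specNorm (X - A) := by
        apply mul_le_mul_of_nonneg_right _ (specNorm_nonneg _)
        rw [Complex.norm_real, Real.norm_eq_abs, abs_of_nonneg ht.1]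
        exact ht.2
    _ < ε := by rw [one_mul]; exact hX

lemma eventually_rootCount_const {n : ℕ} (hn : 1 ≤ n) (A X : Matrix (Fin n) (Fin n) ℂ)
    {ε : ℝ} (hX : specNorm (X - A) < ε) {U V : Set ℂ}
    (hU : IsOpen U) (hV : IsOpen V) (hUV : ∀ z, z ∈ strictPseudo A ε → z ∈ U ∨ z ∈ V)
    (hdisj : ∀ z, z ∈ U → z ∈ V → False)
    {t₀ : ℝ} (ht₀ : t₀ ∈ Icc (0:ℝ) 1) :
    ∀ᶠ t : ℝ in nhdsWithin t₀ (Icc (0:ℝ) 1),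
      rootCount (A + (t:ℂ) • (X - A)) U = rootCount (A + (t₀:ℂ) • (X - A)) U := by
  set Mt : ℝ → Matrix (Fin n) (Fin n) ℂ := fun t => A + (t:ℂ) • (X - A) with hMt_def
  by_contra hcon
  rw [Filter.not_eventually] at hcon
  have hcon' : ∃ᶠ t in nhdsWithin t₀ (Icc (0:ℝ) 1),
      (¬ rootCount (Mt t) U = rootCount (Mt t₀) U) ∧ t ∈ Icc (0:ℝ) 1 :=
    hcon.and_eventually self_mem_nhdsWithin
  obtain ⟨u, hu_t, hu_p⟩ := Filter.exists_seq_forall_of_frequently hcon'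
  have hu_tend : Filter.Tendsto u Filter.atTop (nhds t₀) := hu_t.mono_right nhdsWithin_le_nhds
  -- tuples of roots
  have hex : ∀ j : ℕ, ∃ r : Fin n → ℂ,
      (Mt (u j)).charpoly.roots = Multiset.map r Finset.univ.val :=
    fun j => exists_roots_tuple _
  choose r hr using hex
  -- uniform bound on roots
  set R : ℝ := specNorm A + specNorm (X - A) with hR
  have hbound : ∀ (t : ℝ), t ∈ Icc (0:ℝ) 1 → ∀ z : ℂ, (Mt t).charpoly.IsRoot z → ‖z‖ ≤ R := by
    intro t ht z hz
    have h1 : ‖z‖ ≤ specNorm (Mt t) := norm_le_specNorm_of_mem hn ((mem_spectrum_iff_root _ z).2 hz)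
    refine h1.trans ?_
    calc specNorm (Mt t) ≤ specNorm A + specNorm ((t:ℂ) • (X - A)) := specNorm_add_le _ _
      _ ≤ specNorm A + specNorm (X - A) := by
          gcongr
          calc specNorm ((t:ℂ) • (X - A)) ≤ ‖(t:ℂ)‖ * specNorm (X - A) := specNorm_smul_le hn _ _
            _ ≤ 1 * specNorm (X - A) := by
                apply mul_le_mul_of_nonneg_right _ (specNorm_nonneg _)
                rw [Complex.norm_real, Real.norm_eq_abs, abs_of_nonneg ht.1]
                exact ht.2
            _ = specNorm (X - A) := one_mul _
  set K : Set (Fin n → ℂ) := Set.univ.pi (fun _ : Fin n => Metric.closedBall (0:ℂ) R) with hK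
  have hKcomp : IsCompact K := isCompact_univ_pi (fun _ => isCompact_closedBall _ _)
  have hrK : ∀ j, r j ∈ K := by
    intro j
    intro i _
    have hmem : r j i ∈ (Mt (u j)).charpoly.roots := by
      rw [hr j]
      exact Multiset.mem_map.2 ⟨i, Finset.mem_univ i, rfl⟩
    have hroot : (Mt (u j)).charpoly.IsRoot (r j i) :=
      (Polynomial.mem_roots'.1 hmem).2
    have := hbound (u j) (hu_p j).2 _ hroot
    simpa [Metric.mem_closedBall, dist_eq_norm] using this
  obtain ⟨z, hzK, φ, hφmono, hφtend⟩ := hKcomp.tendsto_subseq hrK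
  have huφ : Filter.Tendsto (u ∘ φ) Filter.atTop (nhds t₀) :=
    hu_tend.comp hφmono.tendsto_atTop
  have hMtc : Continuous Mt :=
    continuous_const.add (Complex.continuous_ofReal.smul continuous_const)
  -- limit identification
  have heval : ∀ w : ℂ, eval w (Mt t₀).charpoly = ∏ i, (w - z i) := by
    intro w
    have h1 : Filter.Tendsto (fun j => eval w (Mt (u (φ j))).charpoly)
        Filter.atTop (nhds (eval w (Mt t₀).charpoly)) := by
      simp only [_root_.eval_charpoly]
      have hc : Continuous fun M : Matrix (Fin n) (Fin n) ℂ => (Matrix.scalar (Fin n) w - M).det :=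
        Continuous.matrix_det (continuous_const.sub continuous_id)
      exact (hc.tendsto _).comp ((hMtc.tendsto t₀).comp huφ)
    have h2 : Filter.Tendsto (fun j => ∏ i, (w - r (φ j) i))
        Filter.atTop (nhds (∏ i, (w - z i))) := by
      have hc : Continuous fun v : Fin n → ℂ => ∏ i, (w - v i) :=
        continuous_finset_prod _ fun i _ => continuous_const.sub (continuous_apply i)
      exact (hc.tendsto z).comp hφtend
    have h3 : ∀ j, eval w (Mt (u (φ j))).charpoly = ∏ i, (w - r (φ j) i) :=
      fun j => eval_eq_prod_of_roots_tuple (hr (φ j)) w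
    simp only [h3] at h1
    exact tendsto_nhds_unique h1 h2
  have hroots : (Mt t₀).charpoly.roots = Multiset.map z Finset.univ.val := by
    have hfact : (Mt t₀).charpoly
        = ((Multiset.map z Finset.univ.val).map (fun a => Polynomial.X - Polynomial.C a)).prod := by
      apply Polynomial.funext
      intro w
      rw [heval w, eval_multiset_prod, Multiset.map_map, Multiset.map_map]
      rw [Finset.prod_eq_multiset_prod]
      congr 1
      apply Multiset.map_congr rfl
      intro i _
      simp
    rw [hfact, Polynomial.roots_multiset_prod_X_sub_C]
  -- eventual classification of root positions
  have hside : ∀ i : Fin n, ∀ᶠ j in Filter.atTop, (r (φ j) i ∈ U ↔ z i ∈ U) := by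
    intro i
    have hzroot : (Mt t₀).charpoly.IsRoot (z i) := by
      have hmem : z i ∈ (Mt t₀).charpoly.roots := by
        rw [hroots]
        exact Multiset.mem_map.2 ⟨i, Finset.mem_univ i, rfl⟩
      exact (Polynomial.mem_roots'.1 hmem).2
    have hzΛ : z i ∈ strictPseudo A ε := roots_mem_pseudo hn A X hX ht₀ hzroot
    have htendi : Filter.Tendsto (fun j => r (φ j) i) Filter.atTop (nhds (z i)) :=
      tendsto_pi_nhds.1 hφtend i
    rcases hUV _ hzΛ with hU' | hV'
    · exact (htendi.eventually_mem (hU.mem_nhds hU')).mono fun j hj => iff_of_true hj hU'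
    · refine (htendi.eventually_mem (hV.mem_nhds hV')).mono fun j hj =>
        iff_of_false (fun hU2 => hdisj _ hU2 hj) (fun hU2 => hdisj _ hU2 hV')
  have hsides : ∀ᶠ j in Filter.atTop, ∀ i : Fin n, (r (φ j) i ∈ U ↔ z i ∈ U) :=
    Filter.eventually_all.2 hside
  obtain ⟨j, hj⟩ := hsides.exists
  apply (hu_p (φ j)).1
  rw [rootCount_of_tuple (hr (φ j)) U, rootCount_of_tuple hroots U]
  congr 1
  apply Finset.filter_congr
  intro i _
  exact hj i
lemma rootCount_const {n : ℕ} (hn : 1 ≤ n) (A X : Matrix (Fin n) (Fin n) ℂ)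
    {ε : ℝ} (hX : specNorm (X - A) < ε) {U V : Set ℂ}
    (hU : IsOpen U) (hV : IsOpen V) (hUV : ∀ z, z ∈ strictPseudo A ε → z ∈ U ∨ z ∈ V)
    (hdisj : ∀ z, z ∈ U → z ∈ V → False) :
    rootCount X U = rootCount A U := by
  haveI : PreconnectedSpace (Icc (0:ℝ) 1) :=
    Subtype.preconnectedSpace isPreconnected_Icc
  set f : Icc (0:ℝ) 1 → ℕ := fun t => rootCount (A + ((t : ℝ) : ℂ) • (X - A)) U with hf
  have hlc : IsLocallyConstant f := by
    rw [IsLocallyConstant.iff_eventually_eq]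
    intro x
    have hev := eventually_rootCount_const hn A X hX hU hV hUV hdisj x.2
    have htend : Filter.Tendsto (Subtype.val : Icc (0:ℝ) 1 → ℝ) (nhds x)
        (nhdsWithin x.val (Icc (0:ℝ) 1)) :=
      tendsto_nhdsWithin_of_tendsto_nhds_of_eventually_within _
        continuous_subtype_val.continuousAt (Filter.Eventually.of_forall fun y => y.2)
    exact htend.eventually hev
  have h01 : f ⟨1, by norm_num⟩ = f ⟨0, by norm_num⟩ :=
    hlc.apply_eq_of_isPreconnected isPreconnected_univ trivial trivial
  have hX1 : A + ((1:ℝ) : ℂ) • (X - A) = X := by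
    push_cast
    rw [one_smul]
    abel
  have hA0 : A + ((0:ℝ) : ℂ) • (X - A) = A := by
    push_cast
    rw [zero_smul, add_zero]
  rw [hf] at h01
  simpa [hX1, hA0] using h01

lemma sum_rootMult (p : Polynomial ℂ) (U : Set ℂ) :
    ∑ α ∈ p.roots.toFinset.filter (fun α => α ∈ U), p.rootMultiplicity α
      = Multiset.card (p.roots.filter (fun α => α ∈ U)) := by
  rw [← Multiset.toFinset_sum_count_eq (p.roots.filter (fun α => α ∈ U)),
    Multiset.toFinset_filter]
  apply Finset.sum_congr rfl
  intro α hα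
  rw [Finset.mem_filter] at hα
  rw [Multiset.count_filter_of_pos hα.2, Polynomial.count_roots]

lemma rootMult_le {n : ℕ} (X : Matrix (Fin n) (Fin n) ℂ) (ξ : ℂ) :
    X.charpoly.rootMultiplicity ξ ≤ n := by
  rw [← Polynomial.count_roots]
  exact le_trans (Multiset.count_le_card _ _) (le_of_eq (charpoly_roots_card X))

lemma maxMult_le {n : ℕ} (X : Matrix (Fin n) (Fin n) ℂ) : maxMult X ≤ n := by
  apply csSup_le'
  rintro m ⟨ξ, hξ, rfl⟩
  exact rootMult_le X ξ

lemma muEps_le {n : ℕ} (A : Matrix (Fin n) (Fin n) ℂ) (ε : ℝ) : muEps A ε ≤ n := by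
  apply csSup_le'
  rintro m ⟨w, hw, rfl⟩
  rw [sum_rootMult]
  calc Multiset.card _ ≤ Multiset.card A.charpoly.roots :=
        Multiset.card_le_card (Multiset.filter_le _ _)
    _ = n := charpoly_roots_card A

lemma core_lemma {n : ℕ} (hn : 1 ≤ n) (A X : Matrix (Fin n) (Fin n) ℂ) {ε : ℝ} (k : ℕ)
    (hε : 0 < ε) (hμ : muEps A ε ≤ k) (hm : k + 1 ≤ maxMult X) :
    ε ≤ specNorm (X - A) := by
  by_contra hlt
  push_neg at hlt
  rw [maxMult] at hm
  have hSne : {m : ℕ | ∃ ξ ∈ spectrum ℂ X, m = X.charpoly.rootMultiplicity ξ}.Nonempty := by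
    by_contra hne
    rw [Set.not_nonempty_iff_eq_empty] at hne
    rw [hne, csSup_empty] at hm
    simp at hm
  have hSbdd : BddAbove {m : ℕ | ∃ ξ ∈ spectrum ℂ X, m = X.charpoly.rootMultiplicity ξ} := by
    refine ⟨n, ?_⟩
    rintro m ⟨ξ, hξ, rfl⟩
    exact rootMult_le X ξ
  obtain ⟨ξ, hξspec, hξeq⟩ := Nat.sSup_mem hSne hSbdd
  set Λ := strictPseudo A ε with hΛdef
  have hξΛ : ξ ∈ Λ := ⟨X, hlt, hξspec⟩
  set U := connectedComponentIn Λ ξ with hUdef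
  have hΛopen : IsOpen Λ := isOpen_strictPseudo hn A ε
  have hUopen : IsOpen U := hΛopen.connectedComponentIn
  set V := Λ \ U with hVdef
  have hVopen : IsOpen V := by
    rw [isOpen_iff_forall_mem_open]
    rintro y ⟨hyΛ, hyU⟩
    refine ⟨connectedComponentIn Λ y, ?_, hΛopen.connectedComponentIn,
      mem_connectedComponentIn hyΛ⟩
    intro x hx
    refine ⟨connectedComponentIn_subset _ _ hx, fun hxU => hyU ?_⟩
    have e1 := connectedComponentIn_eq hx
    have e2 := connectedComponentIn_eq hxU
    rw [hUdef, e2, ← e1]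
    exact mem_connectedComponentIn hyΛ
  have hUV : ∀ z, z ∈ Λ → z ∈ U ∨ z ∈ V := fun z hz => by
    by_cases h : z ∈ U
    · exact Or.inl h
    · exact Or.inr ⟨hz, h⟩
  have hdisj : ∀ z, z ∈ U → z ∈ V → False := fun z h1 h2 => h2.2 h1
  have hconst := rootCount_const hn A X hlt hUopen hVopen hUV hdisj
  have hlow : k + 1 ≤ rootCount X U := by
    have hξU : ξ ∈ U := mem_connectedComponentIn hξΛ
    have h1 : X.charpoly.rootMultiplicity ξ ≤ rootCount X U := by
      rw [rootCount, ← Polynomial.count_roots]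
      calc Multiset.count ξ X.charpoly.roots
          = Multiset.count ξ (X.charpoly.roots.filter (fun α => α ∈ U)) :=
            (Multiset.count_filter_of_pos hξU).symm
        _ ≤ Multiset.card (X.charpoly.roots.filter (fun α => α ∈ U)) :=
            Multiset.count_le_card _ _
    calc k + 1 ≤ _ := hm
      _ = X.charpoly.rootMultiplicity ξ := hξeq
      _ ≤ rootCount X U := h1
  have hup : rootCount A U ≤ muEps A ε := by
    have hval : rootCount A U
        = ∑ α ∈ A.charpoly.roots.toFinset.filter
            (fun α => α ∈ connectedComponentIn (strictPseudo A ε) ξ),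
          A.charpoly.rootMultiplicity α := by
      rw [sum_rootMult]
      rfl
    rw [muEps]
    apply le_csSup
    · refine ⟨n, ?_⟩
      rintro m ⟨w, hw, rfl⟩
      rw [sum_rootMult]
      calc Multiset.card _ ≤ Multiset.card A.charpoly.roots :=
            Multiset.card_le_card (Multiset.filter_le _ _)
        _ = n := charpoly_roots_card A
    · exact ⟨ξ, hξΛ, hval⟩
  omega


/-- Lower bound for the distance from `A` to the set of matrices having an eigenvalue of
multiplicity at least `k+1`. -/
theorem dist_to_higher_multiplicity {n : ℕ} (hn : 1 ≤ n) (A : Matrix (Fin n) (Fin n) ℂ)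
    (k : ℕ) (hk₁ : maxMult A ≤ k) (hk₂ : k ≤ n) :
    sSup {ε : ℝ | 0 < ε ∧ muEps A ε ≤ k} ≤
      sInf {d : ℝ | ∃ X : Matrix (Fin n) (Fin n) ℂ, k + 1 ≤ maxMult X ∧
        d = specNorm (X - A)} := by
  by_cases hkn : k = n
  · have hD : {d : ℝ | ∃ X : Matrix (Fin n) (Fin n) ℂ, k + 1 ≤ maxMult X ∧
        d = specNorm (X - A)} = ∅ := by
      ext d
      simp only [Set.mem_setOf_eq, Set.mem_empty_iff_false, iff_false, not_exists]
      rintro X ⟨h1, h2⟩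
      have := maxMult_le X
      omega
    rw [hD, Real.sInf_empty]
    have hnb : ¬ BddAbove {ε : ℝ | 0 < ε ∧ muEps A ε ≤ k} := by
      rintro ⟨b, hb⟩
      have h1 : max 1 (b + 1) ∈ {ε : ℝ | 0 < ε ∧ muEps A ε ≤ k} := by
        constructor
        · exact lt_of_lt_of_le one_pos (le_max_left _ _)
        · exact le_trans (muEps_le A _) (le_of_eq hkn.symm)
      have h2 := hb h1
      have h3 : b + 1 ≤ max 1 (b + 1) := le_max_right _ _
      linarith
    rw [Real.sSup_of_not_bddAbove hnb]
  · have hklt : k < n := lt_of_le_of_ne hk₂ hkn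
    have hzero_mem : k + 1 ≤ maxMult (0 : Matrix (Fin n) (Fin n) ℂ) := by
      have hchar : (0 : Matrix (Fin n) (Fin n) ℂ).charpoly = Polynomial.X ^ n := by
        apply Polynomial.funext
        intro w
        rw [eval_charpoly, sub_zero]
        haveI : Nonempty (Fin n) := ⟨⟨0, hn⟩⟩
        simp [Matrix.scalar, Matrix.det_diagonal, Finset.prod_const, Finset.card_univ]
      have hspec : (0 : ℂ) ∈ spectrum ℂ (0 : Matrix (Fin n) (Fin n) ℂ) := by
        rw [mem_spectrum_iff_root, hchar]
        simp [IsRoot, zero_pow (by omega : n ≠ 0)]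
      have hmult : (0 : Matrix (Fin n) (Fin n) ℂ).charpoly.rootMultiplicity 0 = n := by
        rw [hchar]
        have : (Polynomial.X : Polynomial ℂ) ^ n = (Polynomial.X - Polynomial.C 0) ^ n := by
          simp
        rw [this, Polynomial.rootMultiplicity_X_sub_C_pow]
      have hbdd : BddAbove {m : ℕ | ∃ ξ ∈ spectrum ℂ (0 : Matrix (Fin n) (Fin n) ℂ),
          m = (0 : Matrix (Fin n) (Fin n) ℂ).charpoly.rootMultiplicity ξ} := by
        refine ⟨n, ?_⟩
        rintro m ⟨ξ, hξ, rfl⟩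
        exact rootMult_le _ ξ
      have hmem : n ∈ {m : ℕ | ∃ ξ ∈ spectrum ℂ (0 : Matrix (Fin n) (Fin n) ℂ),
          m = (0 : Matrix (Fin n) (Fin n) ℂ).charpoly.rootMultiplicity ξ} :=
        ⟨0, hspec, hmult.symm⟩
      calc k + 1 ≤ n := by omega
        _ ≤ maxMult (0 : Matrix (Fin n) (Fin n) ℂ) := le_csSup hbdd hmem
    have hDne : {d : ℝ | ∃ X : Matrix (Fin n) (Fin n) ℂ, k + 1 ≤ maxMult X ∧
        d = specNorm (X - A)}.Nonempty :=
      ⟨specNorm ((0 : Matrix (Fin n) (Fin n) ℂ) - A), 0, hzero_mem, rfl⟩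
    apply Real.sSup_le
    · rintro ε ⟨hε, hμ⟩
      apply le_csInf hDne
      rintro d ⟨X, hm, rfl⟩
      exact core_lemma hn A X k hε hμ hm
    · apply Real.sInf_nonneg
      rintro d ⟨X, hm, rfl⟩
      exact specNorm_nonneg _
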